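/- Let h ≥ 1 and let σ_1, …, σ_{4h−1} be elements of a group G satisfying the braid relations. Set Γ = σ_1σ_2⋯σ_{2h−1} · σ_{4h−1}σ_{4h−2}⋯σ_{2h+1}. Then (σ_1σ_2⋯σ_{4h−1})^{4h} = [ (Γσ_{2h}Γ^{−1})·(Γ^2σ_{2h}Γ^{−2})⋯(Γ^{2h}σ_{2h}Γ^{−2h}) · (σ_1σ_2⋯σ_{2h−1})^{2h} · (σ_{4h−1}σ_{4h−2}⋯σ_{2h+1})^{2h} ]^2, where the first factor is the product over i = 1, …, 2h (in this order) of the conjugates Γ^iσ_{2h}Γ^{−i}. -/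

import Mathlib

namespace BraidFT
variable {G : Type*} [Group G]

def P (σ : ℕ → G) (a k : ℕ) : G := ((List.range' a k).map σ).prod
def Q (σ : ℕ → G) (a k : ℕ) : G := (((List.range' a k).map σ).reverse).prod
def Del (σ : ℕ → G) : ℕ → ℕ → G
  | _, 0 => 1
  | a, (k+1) => Q σ a (k+1) * Del σ (a+1) k

@[simp] lemma P_zero (σ : ℕ → G) (a : ℕ) : P σ a 0 = 1 := rfl
@[simp] lemma Q_zero (σ : ℕ → G) (a : ℕ) : Q σ a 0 = 1 := rfl
@[simp] lemma P_one (σ : ℕ → G) (a : ℕ) : P σ a 1 = σ a := by simp [P]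
@[simp] lemma Q_one (σ : ℕ → G) (a : ℕ) : Q σ a 1 = σ a := by simp [Q]

lemma P_succ_left (σ : ℕ → G) (a k : ℕ) : P σ a (k+1) = σ a * P σ (a+1) k := by
  simp [P, List.range'_succ]

lemma P_succ_right (σ : ℕ → G) (a k : ℕ) : P σ a (k+1) = P σ a k * σ (a+k) := by
  simp [P, List.range'_concat]

lemma Q_succ_left (σ : ℕ → G) (a k : ℕ) : Q σ a (k+1) = Q σ (a+1) k * σ a := by
  simp [Q, List.range'_succ]

lemma Q_succ_right (σ : ℕ → G) (a k : ℕ) : Q σ a (k+1) = σ (a+k) * Q σ a k := by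
  simp [Q, List.range'_concat]

lemma P_append (σ : ℕ → G) (a j l : ℕ) : P σ a (j + l) = P σ a j * P σ (a+j) l := by
  have := List.range'_append (s := a) (m := j) (n := l) (step := 1)
  simp only [one_mul, Nat.mul_one] at this
  rw [P, ← this, List.map_append, List.prod_append]; rfl

lemma Del_succ (σ : ℕ → G) (a k : ℕ) : Del σ a (k+1) = Q σ a (k+1) * Del σ (a+1) k := rfl

lemma commute_P (σ : ℕ → G) (a k : ℕ) (x : G)
    (hx : ∀ i, a ≤ i → i < a + k → Commute x (σ i)) : Commute x (P σ a k) := by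
  apply Commute.list_prod_right
  intro y hy
  simp only [List.mem_map, List.mem_range'_1] at hy
  obtain ⟨i, ⟨h1, h2⟩, rfl⟩ := hy
  exact hx i h1 h2

lemma commute_Q (σ : ℕ → G) (a k : ℕ) (x : G)
    (hx : ∀ i, a ≤ i → i < a + k → Commute x (σ i)) : Commute x (Q σ a k) := by
  apply Commute.list_prod_right
  intro y hy
  simp only [List.mem_reverse, List.mem_map, List.mem_range'_1] at hy
  obtain ⟨i, ⟨h1, h2⟩, rfl⟩ := hy
  exact hx i h1 h2

lemma commute_Del (σ : ℕ → G) (x : G) :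
    ∀ k a, (∀ i, a ≤ i → i < a + k → Commute x (σ i)) → Commute x (Del σ a k) := by
  intro k
  induction k with
  | zero => intro a _; exact Commute.one_right x
  | succ k ih =>
    intro a hx
    rw [Del_succ]
    exact (commute_Q σ a (k+1) x hx).mul_right
      (ih (a+1) (fun i h1 h2 => hx i (by omega) (by omega)))

lemma telescope (g s : G) : ∀ k, ((List.range' 1 k).map (fun i => g^i * s * (g^i)⁻¹)).prod
    = (g*s)^k * (g^k)⁻¹ := by
  intro k
  induction k with
  | zero => simp
  | succ k ih =>
    rw [List.range'_concat, List.map_append, List.prod_append, ih]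
    simp only [List.map_singleton, List.prod_singleton, Nat.mul_one]
    rw [pow_succ (g*s), pow_succ g, show 1+1*k = 1+k from by omega, pow_add]
    group

section Braid
variable (σ : ℕ → G) (N : ℕ)
  (hb : ∀ i, 1 ≤ i → i + 2 ≤ N → σ i * σ (i+1) * σ i = σ (i+1) * σ i * σ (i+1))
  (hc : ∀ i j, 1 ≤ i → 1 ≤ j → i + 1 ≤ N → j + 1 ≤ N → i + 2 ≤ j → σ i * σ j = σ j * σ i)
include hb hc

lemma shift (i k : ℕ) (h1 : 1 ≤ i) (h2 : i + 1 ≤ k) (h3 : k + 1 ≤ N) :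
    SemiconjBy (P σ 1 k) (σ i) (σ (i+1)) := by
  obtain ⟨i', rfl⟩ : ∃ i', i = i' + 1 := ⟨i-1, by omega⟩
  obtain ⟨l, rfl⟩ : ∃ l, k = i' + 2 + l := ⟨k - i' - 2, by omega⟩
  have e1 : SemiconjBy (P σ (i'+3) l) (σ (i'+1)) (σ (i'+1)) :=
    ((commute_P σ (i'+3) l (σ (i'+1))
      (fun j hj1 hj2 => show σ (i'+1) * σ j = σ j * σ (i'+1) from
        hc (i'+1) j (by omega) (by omega) (by omega) (by omega) (by omega))).symm)
  have e2 : SemiconjBy (σ (i'+1) * σ (i'+2)) (σ (i'+1)) (σ (i'+2)) := by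
    show σ (i'+1) * σ (i'+2) * σ (i'+1) = σ (i'+2) * (σ (i'+1) * σ (i'+2))
    rw [← mul_assoc]
    exact hb (i'+1) (by omega) (by omega)
  have e3 : SemiconjBy (P σ 1 i') (σ (i'+2)) (σ (i'+2)) :=
    ((commute_P σ 1 i' (σ (i'+2))
      (fun j hj1 hj2 => show σ (i'+2) * σ j = σ j * σ (i'+2) from
        (hc j (i'+2) (by omega) (by omega) (by omega) (by omega) (by omega)).symm)).symm)
  have e4 : SemiconjBy (P σ 1 i' * ((σ (i'+1) * σ (i'+2)) * P σ (i'+3) l))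
      (σ (i'+1)) (σ (i'+2)) := e3.mul_left (e2.mul_left e1)
  have hsplit : P σ 1 (i'+2+l) = P σ 1 i' * ((σ (i'+1) * σ (i'+2)) * P σ (i'+3) l) := by
    rw [show i'+2+l = i' + (2 + l) from by omega, P_append,
        show (1:ℕ)+i' = i'+1 from by omega,
        show (2:ℕ)+l = (1+l)+1 from by omega, P_succ_left,
        show (1:ℕ)+l = l+1 from by omega, P_succ_left,
        show i'+1+1 = i'+2 from rfl, show i'+2+1 = i'+3 from rfl, mul_assoc]
  rw [hsplit]
  exact e4

lemma shift_pow (k : ℕ) (h3 : k + 1 ≤ N) :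
    ∀ j i, 1 ≤ i → i + j ≤ k → SemiconjBy ((P σ 1 k)^j) (σ i) (σ (i+j)) := by
  intro j
  induction j with
  | zero => intro i _ _; simpa using SemiconjBy.one_left (σ i)
  | succ j ih =>
    intro i h1 h2
    rw [pow_succ, show i + (j+1) = (i+1) + j from by omega]
    exact (ih (i+1) (by omega) (by omega)).mul_left (shift σ N hb hc i k h1 (by omega) h3)

omit hb hc in
lemma sq_shift_step {r s t s1 : G} (hst : s * r = r * s)
    (hbr : t * s * t = s * t * s) (ihq : (r*t) * (r*t) * t = s1 * ((r*t) * (r*t))) :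
    ((r*t)*s) * ((r*t)*s) * s = s1 * (((r*t)*s) * ((r*t)*s)) := by
  have L : ((r*t)*s) * ((r*t)*s) * s = s1 * ((r*t) * (r*t)) * (s*t) := by
    calc ((r*t)*s) * ((r*t)*s) * s
        = (r*t) * (s*r) * (t*(s*s)) := by group
      _ = (r*t) * (r*s) * (t*(s*s)) := by rw [hst]
      _ = ((r*t)*r) * (s*t*s) * s := by group
      _ = ((r*t)*r) * (t*s*t) * s := by rw [hbr]
      _ = ((r*t) * (r*t)) * (s*t*s) := by group
      _ = ((r*t) * (r*t)) * (t*s*t) := by rw [hbr]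
      _ = ((r*t) * (r*t) * t) * (s*t) := by group
      _ = s1 * ((r*t) * (r*t)) * (s*t) := by rw [ihq]
  have R : s1 * (((r*t)*s) * ((r*t)*s)) = s1 * ((r*t) * (r*t)) * (s*t) := by
    calc s1 * (((r*t)*s) * ((r*t)*s))
        = s1 * ((r*t) * (s*r) * (t*s)) := by group
      _ = s1 * ((r*t) * (r*s) * (t*s)) := by rw [hst]
      _ = s1 * (((r*t)*r) * (s*t*s)) := by group
      _ = s1 * (((r*t)*r) * (t*s*t)) := by rw [hbr]
      _ = s1 * ((r*t) * (r*t)) * (s*t) := by group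
  rw [L, R]

lemma sq_shift : ∀ k, 1 ≤ k → k + 1 ≤ N → (P σ 1 k)^2 * σ k = σ 1 * (P σ 1 k)^2 := by
  intro k
  induction k with
  | zero => omega
  | succ k ih =>
    intro _ hN
    rcases Nat.eq_zero_or_pos k with rfl | hk
    · simp [pow_two, mul_assoc]
    obtain ⟨k', rfl⟩ : ∃ k', k = k' + 1 := ⟨k-1, by omega⟩
    have hq : P σ 1 (k'+1) = P σ 1 k' * σ (k'+1) := by
      rw [P_succ_right, show (1:ℕ)+k' = k'+1 from by omega]
    have hP : P σ 1 (k'+1+1) = (P σ 1 k' * σ (k'+1)) * σ (k'+2) := by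
      rw [P_succ_right, show (1:ℕ)+(k'+1) = k'+2 from by omega, hq]
    have hbr : σ (k'+1) * σ (k'+2) * σ (k'+1) = σ (k'+2) * σ (k'+1) * σ (k'+2) :=
      hb (k'+1) (by omega) (by omega)
    have hst : σ (k'+2) * P σ 1 k' = P σ 1 k' * σ (k'+2) :=
      ((commute_P σ 1 k' (σ (k'+2)) (fun j hj1 hj2 =>
        show σ (k'+2) * σ j = σ j * σ (k'+2) from
          (hc j (k'+2) (by omega) (by omega) (by omega) (by omega) (by omega)).symm)).eq)
    have ihq : (P σ 1 k' * σ (k'+1)) * (P σ 1 k' * σ (k'+1)) * σ (k'+1)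
        = σ 1 * ((P σ 1 k' * σ (k'+1)) * (P σ 1 k' * σ (k'+1))) := by
      have := ih (by omega) (by omega)
      rwa [pow_two, hq] at this
    rw [hP, pow_two]
    exact sq_shift_step hst hbr ihq

lemma central (K : ℕ) (hK : 2 ≤ K) (hKN : K + 1 = N) :
    ∀ i, 1 ≤ i → i ≤ K → Commute (σ i) ((P σ 1 K)^(K+1)) := by
  have h1 : Commute (σ 1) ((P σ 1 K)^(K+1)) := by
    obtain ⟨j, rfl⟩ : ∃ j, K = j + 1 := ⟨K-1, by omega⟩
    have hs : (P σ 1 (j+1))^j * σ 1 = σ (1+j) * (P σ 1 (j+1))^j :=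
      shift_pow σ N hb hc (j+1) (by omega) j 1 (by omega) (by omega)
    have hsq : (P σ 1 (j+1))^2 * σ (j+1) = σ 1 * (P σ 1 (j+1))^2 :=
      sq_shift σ N hb hc (j+1) (by omega) (by omega)
    show σ 1 * (P σ 1 (j+1))^(j+1+1) = (P σ 1 (j+1))^(j+1+1) * σ 1
    have e : (P σ 1 (j+1))^(j+1+1) = (P σ 1 (j+1))^2 * (P σ 1 (j+1))^j := by
      rw [← pow_add]; congr 1; omega
    rw [e]
    rw [show (1:ℕ)+j = j+1 from by omega] at hs
    calc σ 1 * ((P σ 1 (j+1))^2 * (P σ 1 (j+1))^j)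
        = (σ 1 * (P σ 1 (j+1))^2) * (P σ 1 (j+1))^j := by rw [mul_assoc]
      _ = ((P σ 1 (j+1))^2 * σ (j+1)) * (P σ 1 (j+1))^j := by rw [hsq]
      _ = (P σ 1 (j+1))^2 * (σ (j+1) * (P σ 1 (j+1))^j) := by rw [mul_assoc]
      _ = (P σ 1 (j+1))^2 * ((P σ 1 (j+1))^j * σ 1) := by rw [← hs]
      _ = ((P σ 1 (j+1))^2 * (P σ 1 (j+1))^j) * σ 1 := by rw [mul_assoc]
  intro i hi1 hi2
  obtain ⟨i', rfl⟩ : ∃ i', i = i' + 1 := ⟨i-1, by omega⟩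
  have hs : (P σ 1 K)^i' * σ 1 = σ (1+i') * (P σ 1 K)^i' :=
    shift_pow σ N hb hc K (by omega) i' 1 (by omega) (by omega)
  rw [show (1:ℕ)+i' = i'+1 from by omega] at hs
  have hpp : (P σ 1 K)^(K+1) * (P σ 1 K)^i' = (P σ 1 K)^i' * (P σ 1 K)^(K+1) := by
    rw [← pow_add, ← pow_add]; congr 1; omega
  have : σ (i'+1) * (P σ 1 K)^(K+1) * (P σ 1 K)^i'
      = (P σ 1 K)^(K+1) * σ (i'+1) * (P σ 1 K)^i' := by
    calc σ (i'+1) * (P σ 1 K)^(K+1) * (P σ 1 K)^i'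
        = σ (i'+1) * ((P σ 1 K)^(K+1) * (P σ 1 K)^i') := by rw [mul_assoc]
      _ = σ (i'+1) * ((P σ 1 K)^i' * (P σ 1 K)^(K+1)) := by rw [hpp]
      _ = (σ (i'+1) * (P σ 1 K)^i') * (P σ 1 K)^(K+1) := by rw [mul_assoc]
      _ = ((P σ 1 K)^i' * σ 1) * (P σ 1 K)^(K+1) := by rw [hs]
      _ = (P σ 1 K)^i' * (σ 1 * (P σ 1 K)^(K+1)) := by rw [mul_assoc]
      _ = (P σ 1 K)^i' * ((P σ 1 K)^(K+1) * σ 1) := by rw [h1.eq]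
      _ = ((P σ 1 K)^i' * (P σ 1 K)^(K+1)) * σ 1 := by rw [mul_assoc]
      _ = ((P σ 1 K)^(K+1) * (P σ 1 K)^i') * σ 1 := by rw [hpp]
      _ = (P σ 1 K)^(K+1) * ((P σ 1 K)^i' * σ 1) := by rw [mul_assoc]
      _ = (P σ 1 K)^(K+1) * (σ (i'+1) * (P σ 1 K)^i') := by rw [hs]
      _ = (P σ 1 K)^(K+1) * σ (i'+1) * (P σ 1 K)^i' := by rw [mul_assoc]
  have := mul_right_cancel this
  exact this

omit hb in
lemma twistE : ∀ k a, 1 ≤ a → a + k + 1 ≤ N →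
    Del σ (a+1) k * P σ a (k+1) = Q σ a (k+1) * Del σ (a+1) k := by
  intro k
  induction k with
  | zero => intro a _ _; simp [Del]
  | succ k ih =>
    intro a ha hN
    have hcomm_a : Commute (σ a) (Del σ (a+2) k) :=
      commute_Del σ (σ a) k (a+2) (fun i h1 h2 =>
        show σ a * σ i = σ i * σ a from
          hc a i (by omega) (by omega) (by omega) (by omega) (by omega))
    have hdel : Del σ (a+1) (k+1) = Q σ (a+1) (k+1) * Del σ (a+1+1) k := Del_succ σ (a+1) k
    have hih : Del σ (a+1+1) k * P σ (a+1) (k+1) = Q σ (a+1) (k+1) * Del σ (a+1+1) k :=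
      ih (a+1) (by omega) (by omega)
    calc Del σ (a+1) (k+1) * P σ a (k+1+1)
        = (Q σ (a+1) (k+1) * Del σ (a+1+1) k) * (σ a * P σ (a+1) (k+1)) := by
          rw [hdel, P_succ_left]
      _ = Q σ (a+1) (k+1) * ((Del σ (a+1+1) k * σ a) * P σ (a+1) (k+1)) := by group
      _ = Q σ (a+1) (k+1) * ((σ a * Del σ (a+1+1) k) * P σ (a+1) (k+1)) := by
          rw [show a+1+1 = a+2 from rfl, ← hcomm_a.eq]
      _ = (Q σ (a+1) (k+1) * σ a) * (Del σ (a+1+1) k * P σ (a+1) (k+1)) := by group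
      _ = (Q σ (a+1) (k+1) * σ a) * (Q σ (a+1) (k+1) * Del σ (a+1+1) k) := by rw [hih]
      _ = Q σ a (k+1+1) * Del σ (a+1) (k+1) := by rw [← Q_succ_left, ← hdel]

omit hb in
lemma conjDelta (u : ℕ) (hN : 2*u + 4 ≤ N) :
    Del σ (u+3) (u+1) * P σ 1 (2*u+3)
      = (P σ 1 (u+1) * Q σ (u+2) (u+2)) * Del σ (u+3) (u+1) := by
  have h2 : P σ (u+2) (u+2) = σ (u+2) * P σ (u+3) (u+1) := P_succ_left σ (u+2) (u+1)
  have hsplit : P σ 1 (2*u+3) = P σ 1 (u+1) * (σ (u+2) * P σ (u+3) (u+1)) := by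
    rw [show 2*u+3 = (u+1) + (u+2) from by omega, P_append,
        show (1:ℕ)+(u+1) = u+2 from by omega, h2]
  have hcA : Commute (P σ 1 (u+1)) (Del σ (u+3) (u+1)) :=
    (commute_Del σ (P σ 1 (u+1)) (u+1) (u+3) (fun i h1 h2 =>
      (commute_P σ 1 (u+1) (σ i) (fun j hj1 hj2 =>
        show σ i * σ j = σ j * σ i from
          (hc j i (by omega) (by omega) (by omega) (by omega) (by omega)).symm)).symm))
  have hcs : Commute (σ (u+2)) (Del σ (u+4) u) :=
    commute_Del σ (σ (u+2)) u (u+4) (fun i h1 h2 =>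
      show σ (u+2) * σ i = σ i * σ (u+2) from
        hc (u+2) i (by omega) (by omega) (by omega) (by omega) (by omega))
  have hdel : Del σ (u+3) (u+1) = Q σ (u+3) (u+1) * Del σ (u+4) u := Del_succ σ (u+3) u
  have hE : Del σ (u+4) u * P σ (u+3) (u+1) = Q σ (u+3) (u+1) * Del σ (u+4) u := by
    have := twistE σ N hc (u) (u+3) (by omega) (by omega)
    simpa using this
  calc Del σ (u+3) (u+1) * P σ 1 (2*u+3)
      = Del σ (u+3) (u+1) * (P σ 1 (u+1) * (σ (u+2) * P σ (u+3) (u+1))) := by rw [hsplit]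
    _ = P σ 1 (u+1) * (Del σ (u+3) (u+1) * (σ (u+2) * P σ (u+3) (u+1))) := by
        rw [← mul_assoc, ← hcA.eq, mul_assoc]
    _ = P σ 1 (u+1) * (Q σ (u+3) (u+1) * ((Del σ (u+4) u * σ (u+2)) * P σ (u+3) (u+1))) := by
        rw [hdel]; group
    _ = P σ 1 (u+1) * (Q σ (u+3) (u+1) * ((σ (u+2) * Del σ (u+4) u) * P σ (u+3) (u+1))) := by
        rw [← hcs.eq]
    _ = P σ 1 (u+1) * ((Q σ (u+3) (u+1) * σ (u+2)) * (Del σ (u+4) u * P σ (u+3) (u+1))) := by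
        group
    _ = P σ 1 (u+1) * ((Q σ (u+3) (u+1) * σ (u+2)) * (Q σ (u+3) (u+1) * Del σ (u+4) u)) := by
        rw [hE]
    _ = (P σ 1 (u+1) * Q σ (u+2) (u+2)) * Del σ (u+3) (u+1) := by
        rw [Q_succ_left σ (u+2) (u+1), show (u:ℕ)+2+1 = u+3 from rfl, ← hdel]; group

end Braid
end BraidFT

/-- The ascending product `σ_a σ_{a+1} ⋯ σ_b` (written left to right). -/
def ascProd {G : Type*} [Group G] (σ : ℕ → G) (a b : ℕ) : G :=
  ((List.range' a (b + 1 - a)).map σ).prod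

/-- The descending product `σ_a σ_{a-1} ⋯ σ_b` (written left to right). -/
def descProd {G : Type*} [Group G] (σ : ℕ → G) (a b : ℕ) : G :=
  (((List.range' b (a + 1 - b)).map σ).reverse).prod

theorem fullTwist_eq_conjugates_chains_squared
    {G : Type*} [Group G] (h : ℕ) (hh : 1 ≤ h) (σ : ℕ → G)
    (hbraid : ∀ i, 1 ≤ i → i + 2 ≤ 4 * h →
      σ i * σ (i + 1) * σ i = σ (i + 1) * σ i * σ (i + 1))
    (hcomm : ∀ i j, 1 ≤ i → 1 ≤ j → i + 1 ≤ 4 * h → j + 1 ≤ 4 * h → i + 2 ≤ j →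
      σ i * σ j = σ j * σ i)
    (Γ : G) (hΓ : Γ = ascProd σ 1 (2 * h - 1) * descProd σ (4 * h - 1) (2 * h + 1)) :
    (ascProd σ 1 (4 * h - 1)) ^ (4 * h) =
      ( ((List.range' 1 (2 * h)).map (fun i => Γ ^ i * σ (2 * h) * (Γ ^ i)⁻¹)).prod
        * (ascProd σ 1 (2 * h - 1)) ^ (2 * h)
        * (descProd σ (4 * h - 1) (2 * h + 1)) ^ (2 * h) ) ^ 2 := by
  obtain ⟨p, rfl⟩ : ∃ p, h = p + 1 := ⟨h - 1, by omega⟩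
  have hb' : ∀ i, 1 ≤ i → i + 2 ≤ 4*p+4 →
      σ i * σ (i+1) * σ i = σ (i+1) * σ i * σ (i+1) :=
    fun i h1 h2 => hbraid i h1 (by omega)
  have hc' : ∀ i j, 1 ≤ i → 1 ≤ j → i + 1 ≤ 4*p+4 → j + 1 ≤ 4*p+4 → i + 2 ≤ j →
      σ i * σ j = σ j * σ i :=
    fun i j h1 h2 h3 h4 h5 => hcomm i j h1 h2 (by omega) (by omega) h5
  simp only [show 2*(p+1) = 2*p+2 from by omega, show 4*(p+1) = 4*p+4 from by omega,
    show 2*p+2-1 = 2*p+1 from by omega, show 4*p+4-1 = 4*p+3 from by omega] at hΓ ⊢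
  -- identifications
  have hA : ascProd σ 1 (2*p+1) = BraidFT.P σ 1 (2*p+1) := rfl
  have hD : ascProd σ 1 (4*p+3) = BraidFT.P σ 1 (4*p+3) := rfl
  have hB : descProd σ (4*p+3) (2*p+2+1) = BraidFT.Q σ (2*p+3) (2*p+1) := by
    have e : descProd σ (4*p+3) (2*p+2+1)
        = BraidFT.Q σ (2*p+2+1) ((4*p+3) + 1 - (2*p+2+1)) := rfl
    rw [e, show (4*p+3) + 1 - (2*p+2+1) = 2*p+1 from by omega,
        show 2*p+2+1 = 2*p+3 from rfl]
  rw [hA, hB] at hΓ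
  rw [hA, hD, hB]
  set A := BraidFT.P σ 1 (2*p+1) with hAdef
  set B := BraidFT.Q σ (2*p+3) (2*p+1) with hBdef
  set δ := BraidFT.P σ 1 (4*p+3) with hδdef
  have hAB : Commute A B := by
    apply BraidFT.commute_Q σ (2*p+3) (2*p+1) A
    intro i h1 h2
    exact (BraidFT.commute_P σ 1 (2*p+1) (σ i) (fun j hj1 hj2 =>
      show σ i * σ j = σ j * σ i from
        (hc' j i (by omega) (by omega) (by omega) (by omega) (by omega)).symm)).symm
  have hGm : Γ ^ (2*p+2) = A ^ (2*p+2) * B ^ (2*p+2) := by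
    rw [hΓ]; exact hAB.mul_pow (2*p+2)
  have hBs : B * σ (2*p+2) = BraidFT.Q σ (2*p+2) (2*p+2) :=
    (BraidFT.Q_succ_left σ (2*p+2) (2*p+1)).symm
  set η := A * BraidFT.Q σ (2*p+2) (2*p+2) with hηdef
  have hGs : Γ * σ (2*p+2) = η := by rw [hΓ, mul_assoc, hBs]
  set c := BraidFT.Del σ (2*p+3) (2*p+1) with hcdef
  have hconj : c * δ = η * c := by
    have := BraidFT.conjDelta σ (4*p+4) hc' (2*p) (by omega)
    rwa [show 2*(2*p)+3 = 4*p+3 from by omega, show 2*p+3 = 2*p+3 from rfl] at this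
  have hcentral : ∀ i, 1 ≤ i → i ≤ 4*p+3 → Commute (σ i) (δ ^ (4*p+4)) := by
    intro i h1 h2
    have := BraidFT.central σ (4*p+4) hb' hc' (4*p+3) (by omega) (by omega) i h1 h2
    exact this
  have hcdn : Commute c (δ ^ (4*p+4)) := by
    apply Commute.symm
    exact BraidFT.commute_Del σ (δ ^ (4*p+4)) (2*p+1) (2*p+3)
      (fun i h1 h2 => (hcentral i (by omega) (by omega)).symm)
  have hsemi : SemiconjBy c δ η := hconj
  have hkey : δ ^ (4*p+4) = η ^ (4*p+4) := by
    have h1 : c * δ ^ (4*p+4) = η ^ (4*p+4) * c := hsemi.pow_right (4*p+4)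
    have h2 : c * δ ^ (4*p+4) = δ ^ (4*p+4) * c := hcdn.eq
    exact mul_right_cancel (h2.symm.trans h1)
  rw [BraidFT.telescope Γ (σ (2*p+2)) (2*p+2)]
  have hinner : (Γ * σ (2*p+2)) ^ (2*p+2) * (Γ ^ (2*p+2))⁻¹ * A ^ (2*p+2) * B ^ (2*p+2)
      = η ^ (2*p+2) := by
    rw [mul_assoc, ← hGm, hGs]; group
  rw [hinner, ← pow_mul, show (2*p+2)*2 = 4*p+4 from by omega, hkey]
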